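/- arXiv:2404.09019 — 2 statements merged into one kernel-verified Lean document; each statement's English description precedes it below -/
import Mathlib

section
/- Under the same setup, if additionally σ := ε M ‖K‖_{L¹} / C < 1, then Φ is a strict contraction on B_ρ: for all v₁, v₂ ∈ B_ρ, ‖Φ(v₁) - Φ(v₂)‖_{L²} ≤ σ ‖v₁ - v₂‖_{L²}. Consequently Φ has a unique fixed point u_p ∈ B_ρ. -/
open MeasureTheory ENNReal

/-- Young's inequality `L¹ ⋆ L² → L²`, measurable version. -/
lemma young_meas (K d : ℝ → ℝ) (hKm : Measurable K) (hdm : Measurable d)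
    (hK : Integrable K (volume : Measure ℝ)) (hd : MemLp d 2 (volume : Measure ℝ)) :
    (∀ᵐ x : ℝ, Integrable (fun y => K (x - y) * d y) volume) ∧
    eLpNorm (fun x : ℝ => ∫ y : ℝ, K (x - y) * d y) 2 volume ≤
      (∫⁻ x : ℝ, (‖K x‖₊ : ℝ≥0∞)) * eLpNorm d 2 volume := by
  set Kn : ℝ → ℝ≥0∞ := fun x => (‖K x‖₊ : ℝ≥0∞) with hKn_def
  set Dn : ℝ → ℝ≥0∞ := fun y => (‖d y‖₊ : ℝ≥0∞) with hDn_def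
  have hKn : Measurable Kn := hKm.enorm
  have hDn : Measurable Dn := hdm.enorm
  set L : ℝ≥0∞ := ∫⁻ x, Kn x with hL_def
  have hL : L ≠ ⊤ := hK.2.ne
  set A : ℝ≥0∞ := ∫⁻ y, Dn y ^ (2 : ℝ) with hA_def
  have h_eLp : eLpNorm d 2 volume = A ^ (1 / (2:ℝ)) := by
    rw [eLpNorm_eq_lintegral_rpow_enorm_toReal (by norm_num) (by norm_num)]
    norm_num [hA_def, hDn_def]
    rfl
  have hA : A ≠ ⊤ := by
    intro h
    have := hd.2
    rw [h_eLp, h] at this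
    simp [ENNReal.top_rpow_of_pos (by norm_num : (0:ℝ) < 1/2)] at this
  -- the pointwise kernel on the product space
  set H : ℝ × ℝ → ℝ≥0∞ := fun p => Kn (p.1 - p.2) * Dn p.2 ^ (2:ℝ) with hH_def
  have hH : Measurable H :=
    (hKn.comp (measurable_fst.sub measurable_snd)).mul ((hDn.comp measurable_snd).pow_const _)
  set I : ℝ → ℝ≥0∞ := fun x => ∫⁻ y, Kn (x - y) * Dn y with hI_def
  have hI : Measurable I := by
    apply Measurable.lintegral_prod_right' (f := fun p : ℝ × ℝ => Kn (p.1 - p.2) * Dn p.2)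
    exact (hKn.comp (measurable_fst.sub measurable_snd)).mul (hDn.comp measurable_snd)
  set B : ℝ → ℝ≥0∞ := fun x => ∫⁻ y, Kn (x - y) * Dn y ^ (2:ℝ) with hB_def
  -- Cauchy-Schwarz pointwise
  have key : ∀ x : ℝ, I x ^ (2:ℝ) ≤ L * B x := by
    intro x
    have hxK : ∫⁻ y, Kn (x - y) = L :=
      (Measure.measurePreserving_sub_left volume x).lintegral_comp hKn
    have hCS : I x ≤ L ^ (1/(2:ℝ)) * B x ^ (1/(2:ℝ)) := by
      have h := ENNReal.lintegral_mul_le_Lp_mul_Lq volume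
        (⟨by norm_num, by norm_num, by norm_num⟩ : Real.HolderConjugate 2 2)
        (f := fun y => Kn (x - y) ^ (1/(2:ℝ)))
        (g := fun y => Kn (x - y) ^ (1/(2:ℝ)) * Dn y)
        ((hKn.comp (measurable_const.sub measurable_id)).pow_const _).aemeasurable
        (((hKn.comp (measurable_const.sub measurable_id)).pow_const _).mul hDn).aemeasurable
      have e1 : ∀ y : ℝ, Kn (x - y) ^ (1/(2:ℝ)) * (Kn (x - y) ^ (1/(2:ℝ)) * Dn y)
          = Kn (x - y) * Dn y := by
        intro y
        rw [← mul_assoc, ← ENNReal.rpow_add_of_nonneg _ _ (by norm_num) (by norm_num)]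
        norm_num
      have e2 : ∀ y : ℝ, (Kn (x - y) ^ (1/(2:ℝ))) ^ (2:ℝ) = Kn (x - y) := by
        intro y
        rw [← ENNReal.rpow_mul]
        norm_num
      have e3 : ∀ y : ℝ, (Kn (x - y) ^ (1/(2:ℝ)) * Dn y) ^ (2:ℝ)
          = Kn (x - y) * Dn y ^ (2:ℝ) := by
        intro y
        rw [ENNReal.mul_rpow_of_nonneg _ _ (by norm_num : (0:ℝ) ≤ 2), ← ENNReal.rpow_mul]
        norm_num
      calc I x = ∫⁻ y, Kn (x - y) ^ (1/(2:ℝ)) * (Kn (x - y) ^ (1/(2:ℝ)) * Dn y) := by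
              simp only [hI_def]; exact lintegral_congr fun y => (e1 y).symm
        _ ≤ (∫⁻ y, (Kn (x - y) ^ (1/(2:ℝ))) ^ (2:ℝ)) ^ (1/(2:ℝ)) *
            (∫⁻ y, (Kn (x - y) ^ (1/(2:ℝ)) * Dn y) ^ (2:ℝ)) ^ (1/(2:ℝ)) := h
        _ = L ^ (1/(2:ℝ)) * B x ^ (1/(2:ℝ)) := by
            rw [lintegral_congr e2, lintegral_congr e3, hxK]
    calc I x ^ (2:ℝ) ≤ (L ^ (1/(2:ℝ)) * B x ^ (1/(2:ℝ))) ^ (2:ℝ) :=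
          ENNReal.rpow_le_rpow hCS (by norm_num)
      _ = L * B x := by
          rw [ENNReal.mul_rpow_of_nonneg _ _ (by norm_num : (0:ℝ) ≤ 2),
            ← ENNReal.rpow_mul, ← ENNReal.rpow_mul]
          norm_num
  -- Fubini computation
  have hBint : ∫⁻ x, B x = L * A := by
    have hswap : ∫⁻ x, ∫⁻ y, Kn (x - y) * Dn y ^ (2:ℝ) ∂volume ∂volume
        = ∫⁻ y, ∫⁻ x, Kn (x - y) * Dn y ^ (2:ℝ) ∂volume ∂volume :=
      lintegral_lintegral_swap hH.aemeasurable
    rw [hB_def]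
    simp only []
    rw [hswap]
    have : ∀ y : ℝ, ∫⁻ x, Kn (x - y) * Dn y ^ (2:ℝ) ∂volume = L * Dn y ^ (2:ℝ) := by
      intro y
      have hm : Measurable (fun x : ℝ => Kn (x - y)) :=
        hKn.comp (measurable_id.sub measurable_const)
      rw [lintegral_mul_const _ hm, lintegral_sub_right_eq_self Kn y, mul_comm]
    rw [lintegral_congr this, lintegral_const_mul' _ _ hL]
  have hIbound : ∫⁻ x, I x ^ (2:ℝ) ≤ L * (L * A) := by
    calc ∫⁻ x, I x ^ (2:ℝ) ≤ ∫⁻ x, L * B x := lintegral_mono key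
      _ = L * ∫⁻ x, B x := lintegral_const_mul' _ _ hL
      _ = L * (L * A) := by rw [hBint]
  have hIfin : ∀ᵐ x : ℝ, I x < ⊤ := by
    have h1 : ∀ᵐ x : ℝ, I x ^ (2:ℝ) < ⊤ := by
      apply ae_lt_top' (hI.pow_const _).aemeasurable
      exact ne_top_of_le_ne_top (by finiteness) hIbound
    filter_upwards [h1] with x hx
    rw [ENNReal.rpow_lt_top_iff_of_pos (by norm_num : (0:ℝ) < 2)] at hx
    exact hx
  constructor
  · filter_upwards [hIfin] with x hx
    refine ⟨((hKm.comp (measurable_const.sub measurable_id)).mul hdm).aestronglyMeasurable, ?_⟩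
    have : ∫⁻ y, (‖K (x - y) * d y‖₊ : ℝ≥0∞) = I x := by
      apply lintegral_congr
      intro y
      simp [hI_def, hKn_def, hDn_def, nnnorm_mul, ENNReal.coe_mul]
    show ∫⁻ y, (‖K (x - y) * d y‖₊ : ℝ≥0∞) < ⊤
    rw [this]; exact hx
  · rw [eLpNorm_eq_lintegral_rpow_enorm_toReal (by norm_num) (by norm_num), h_eLp]
    have hpt : ∀ x : ℝ, (‖∫ y : ℝ, K (x - y) * d y‖₊ : ℝ≥0∞) ^ ((2:ℝ≥0∞).toReal)
        ≤ I x ^ (2:ℝ) := by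
      intro x
      rw [ENNReal.toReal_ofNat]
      refine ENNReal.rpow_le_rpow ?_ (by norm_num)
      refine le_trans (enorm_integral_le_lintegral_enorm _) ?_
      apply le_of_eq
      apply lintegral_congr
      intro y
      simp [hI_def, hKn_def, hDn_def, nnnorm_mul, ENNReal.coe_mul]
      rfl
    calc (∫⁻ x, (‖∫ y : ℝ, K (x - y) * d y‖₊ : ℝ≥0∞) ^ ((2:ℝ≥0∞).toReal)) ^ (1/(2:ℝ≥0∞).toReal)
        ≤ (∫⁻ x, I x ^ (2:ℝ)) ^ (1/(2:ℝ≥0∞).toReal) := by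
          apply ENNReal.rpow_le_rpow (lintegral_mono hpt)
          norm_num
      _ ≤ (L * (L * A)) ^ (1/(2:ℝ≥0∞).toReal) := by
          apply ENNReal.rpow_le_rpow hIbound
          norm_num
      _ = L * A ^ (1/(2:ℝ)) := by
          rw [ENNReal.toReal_ofNat, ← mul_assoc]
          rw [ENNReal.mul_rpow_of_nonneg _ _ (by norm_num : (0:ℝ) ≤ 1/2)]
          congr 1
          rw [← pow_two, ← ENNReal.rpow_two, ← ENNReal.rpow_mul]
          norm_num
lemma young_ae (K d : ℝ → ℝ) (hK : Integrable K (volume : Measure ℝ))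
    (hd : MemLp d 2 (volume : Measure ℝ)) :
    (∀ᵐ x : ℝ, Integrable (fun y => K (x - y) * d y) volume) ∧
    eLpNorm (fun x : ℝ => ∫ y : ℝ, K (x - y) * d y) 2 volume ≤
      ENNReal.ofReal (∫ x : ℝ, |K x|) * eLpNorm d 2 volume := by
  set K' : ℝ → ℝ := hK.1.mk K with hK'_def
  set d' : ℝ → ℝ := hd.1.mk d with hd'_def
  have hKe : K =ᵐ[volume] K' := hK.1.ae_eq_mk
  have hde : d =ᵐ[volume] d' := hd.1.ae_eq_mk
  have hK'm : Measurable K' := hK.1.stronglyMeasurable_mk.measurable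
  have hd'm : Measurable d' := hd.1.stronglyMeasurable_mk.measurable
  have hK' : Integrable K' volume := hK.congr hKe
  have hd' : MemLp d' 2 volume := hd.ae_eq hde
  have slice : ∀ x : ℝ, (fun y => K (x - y) * d y) =ᵐ[volume] fun y => K' (x - y) * d' y := by
    intro x
    have h1 : (fun y : ℝ => K (x - y)) =ᵐ[volume] fun y : ℝ => K' (x - y) :=
      (Measure.measurePreserving_sub_left volume x).quasiMeasurePreserving.ae_eq_comp hKe
    exact h1.mul hde
  have hfun : (fun x : ℝ => ∫ y : ℝ, K (x - y) * d y)
      = fun x : ℝ => ∫ y : ℝ, K' (x - y) * d' y := by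
    funext x
    exact integral_congr_ae (slice x)
  have h := young_meas K' d' hK'm hd'm hK' hd'
  constructor
  · filter_upwards [h.1] with x hx
    exact (integrable_congr (slice x)).mpr hx
  · rw [hfun]
    refine h.2.trans (le_of_eq ?_)
    congr 1
    · rw [show (∫⁻ x, (‖K' x‖₊ : ℝ≥0∞)) = ∫⁻ x, ‖K' x‖ₑ from rfl, ← ofReal_integral_norm_eq_lintegral_enorm hK']
      congr 1
      refine integral_congr_ae ?_
      filter_upwards [hKe] with x hx
      rw [← hx, Real.norm_eq_abs]
    · exact (eLpNorm_congr_ae hde).symm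

theorem strict_contraction_and_fixed_point (C M ε ρ : ℝ) (hC : 0 < C) (hM : 0 < M)
    (hε : 0 < ε) (hρ0 : 0 < ρ) (hρ1 : ρ ≤ 1)
    (K : ℝ → ℝ) (hK : Integrable K (volume : Measure ℝ))
    (u₀ : Lp ℝ 2 (volume : Measure ℝ))
    (g : ℝ → ℝ) (hg : Differentiable ℝ g) (hg0 : g 0 = 0)
    (hg' : ∀ z : ℝ, |deriv g z| ≤ M)
    (T : Lp ℝ 2 (volume : Measure ℝ) →ₗ[ℝ] Lp ℝ 2 (volume : Measure ℝ))
    (hT : ∀ h : Lp ℝ 2 (volume : Measure ℝ), ‖T h‖ ≤ ‖h‖ / C)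
    (hconv : ∀ v : Lp ℝ 2 (volume : Measure ℝ),
      MemLp (fun x : ℝ => ∫ y : ℝ, K (x - y) * g (u₀ y + v y)) 2 (volume : Measure ℝ))
    (Φ : Lp ℝ 2 (volume : Measure ℝ) → Lp ℝ 2 (volume : Measure ℝ))
    (hΦ : ∀ v, Φ v = ε • T ((hconv v).toLp _))
    (hεbound : ε ≤ ρ * C / (M * (∫ x : ℝ, |K x|) * (‖u₀‖ + 1)))
    (σ : ℝ) (hσdef : σ = ε * M * (∫ x : ℝ, |K x|) / C) (hσ : σ < 1) :
    (∀ v₁ v₂ : Lp ℝ 2 (volume : Measure ℝ), ‖v₁‖ ≤ ρ → ‖v₂‖ ≤ ρ →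
      ‖Φ v₁ - Φ v₂‖ ≤ σ * ‖v₁ - v₂‖) ∧
    (∃! u_p : Lp ℝ 2 (volume : Measure ℝ), ‖u_p‖ ≤ ρ ∧ Φ u_p = u_p) := by
  set r : ℝ := ∫ x : ℝ, |K x| with hr_def
  have hr0 : 0 ≤ r := integral_nonneg fun x => abs_nonneg _
  have hrpos : 0 < r := by
    rcases hr0.eq_or_lt with h | h
    · exfalso
      rw [← h] at hεbound
      norm_num at hεbound
      linarith
    · exact h
  -- Lipschitz bound for g
  have hLip : LipschitzWith M.toNNReal g := by
    apply lipschitzWith_of_nnnorm_deriv_le hg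
    intro z
    rw [← NNReal.coe_le_coe, coe_nnnorm, Real.coe_toNNReal _ hM.le, Real.norm_eq_abs]
    exact hg' z
  have hLip' : ∀ a b : ℝ, ‖g a - g b‖ ≤ M * ‖a - b‖ := by
    intro a b
    have := hLip.dist_le_mul a b
    rwa [dist_eq_norm, dist_eq_norm, Real.coe_toNNReal _ hM.le] at this
  have hG : ∀ v : Lp ℝ 2 (volume : Measure ℝ),
      MemLp (fun x : ℝ => g (u₀ x + v x)) 2 (volume : Measure ℝ) := fun v =>
    hLip.comp_memLp hg0 ((Lp.memLp u₀).add (Lp.memLp v))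
  -- norm of the lifted convolution
  have hnorm_toLp : ∀ v : Lp ℝ 2 (volume : Measure ℝ),
      ‖(hconv v).toLp _‖ = (eLpNorm (fun x : ℝ => ∫ y : ℝ, K (x - y) * g (u₀ y + v y))
        2 volume).toReal := fun v => Lp.norm_toLp _ _
  -- contraction estimate (no ball hypotheses needed)
  have contraction : ∀ v₁ v₂ : Lp ℝ 2 (volume : Measure ℝ),
      ‖Φ v₁ - Φ v₂‖ ≤ σ * ‖v₁ - v₂‖ := by
    intro v₁ v₂
    set G₁ : ℝ → ℝ := fun x => g (u₀ x + v₁ x) with hG₁_def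
    set G₂ : ℝ → ℝ := fun x => g (u₀ x + v₂ x) with hG₂_def
    have h₁ := young_ae K G₁ hK (hG v₁)
    have h₂ := young_ae K G₂ hK (hG v₂)
    have hd : MemLp (fun y : ℝ => G₁ y - G₂ y) 2 volume := (hG v₁).sub (hG v₂)
    have hdy := young_ae K (fun y => G₁ y - G₂ y) hK hd
    have hdiff : ((fun x : ℝ => ∫ y : ℝ, K (x - y) * G₁ y) -
        fun x : ℝ => ∫ y : ℝ, K (x - y) * G₂ y)
        =ᵐ[volume] fun x : ℝ => ∫ y : ℝ, K (x - y) * (G₁ y - G₂ y) := by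
      filter_upwards [h₁.1, h₂.1] with x hx1 hx2
      simp only [Pi.sub_apply]
      rw [← integral_sub hx1 hx2]
      exact integral_congr_ae (Filter.Eventually.of_forall fun y => (mul_sub _ _ _).symm)
    have hsnorm : eLpNorm (fun y : ℝ => G₁ y - G₂ y) 2 volume ≤
        ENNReal.ofReal M * eLpNorm (⇑(v₁ - v₂)) 2 volume := by
      apply eLpNorm_le_mul_eLpNorm_of_ae_le_mul
      filter_upwards [Lp.coeFn_sub v₁ v₂] with y hy
      rw [hy, Pi.sub_apply]
      have := hLip' (u₀ y + v₁ y) (u₀ y + v₂ y)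
      rwa [add_sub_add_left_eq_sub] at this
    have hFbound : eLpNorm (fun x : ℝ => ∫ y : ℝ, K (x - y) * (G₁ y - G₂ y)) 2 volume ≤
        ENNReal.ofReal r * (ENNReal.ofReal M * eLpNorm (⇑(v₁ - v₂)) 2 volume) :=
      hdy.2.trans (mul_le_mul_right hsnorm _)
    have hLpdiff : ‖(hconv v₁).toLp _ - (hconv v₂).toLp _‖ ≤ r * (M * ‖v₁ - v₂‖) := by
      rw [← MemLp.toLp_sub, Lp.norm_toLp]
      have heq : eLpNorm ((fun x : ℝ => ∫ y : ℝ, K (x - y) * g (u₀ y + v₁ y)) -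
          fun x : ℝ => ∫ y : ℝ, K (x - y) * g (u₀ y + v₂ y)) 2 volume ≤
          ENNReal.ofReal r * (ENNReal.ofReal M * eLpNorm (⇑(v₁ - v₂)) 2 volume) := by
        rw [eLpNorm_congr_ae hdiff]
        exact hFbound
      have hfin : ENNReal.ofReal r * (ENNReal.ofReal M * eLpNorm (⇑(v₁ - v₂)) 2 volume) ≠ ⊤ := by
        apply ENNReal.mul_ne_top ENNReal.ofReal_ne_top
        exact ENNReal.mul_ne_top ENNReal.ofReal_ne_top (Lp.eLpNorm_ne_top _)
      refine le_trans (ENNReal.toReal_mono hfin heq) (le_of_eq ?_)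
      rw [ENNReal.toReal_mul, ENNReal.toReal_mul, ENNReal.toReal_ofReal hr0,
        ENNReal.toReal_ofReal hM.le, ← Lp.norm_def]
    have hΦdiff : Φ v₁ - Φ v₂ = ε • T ((hconv v₁).toLp _ - (hconv v₂).toLp _) := by
      rw [hΦ v₁, hΦ v₂, ← smul_sub, ← map_sub]
    rw [hΦdiff, norm_smul, Real.norm_eq_abs, abs_of_pos hε]
    calc ε * ‖T ((hconv v₁).toLp _ - (hconv v₂).toLp _)‖
        ≤ ε * (‖(hconv v₁).toLp _ - (hconv v₂).toLp _‖ / C) := by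
          exact mul_le_mul_of_nonneg_left (hT _) hε.le
      _ ≤ ε * (r * (M * ‖v₁ - v₂‖) / C) := by
          apply mul_le_mul_of_nonneg_left _ hε.le
          gcongr
      _ = σ * ‖v₁ - v₂‖ := by rw [hσdef]; field_simp
  -- Φ maps the ball into itself
  have invariance : ∀ v : Lp ℝ 2 (volume : Measure ℝ), ‖v‖ ≤ ρ → ‖Φ v‖ ≤ ρ := by
    intro v hv
    set G : ℝ → ℝ := fun x => g (u₀ x + v x) with hG_def
    have hy := young_ae K G hK (hG v)
    have hsnorm : eLpNorm G 2 volume ≤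
        ENNReal.ofReal M * eLpNorm (⇑(u₀ + v)) 2 volume := by
      apply eLpNorm_le_mul_eLpNorm_of_ae_le_mul
      filter_upwards [Lp.coeFn_add u₀ v] with y hy'
      rw [hy', Pi.add_apply]
      have := hLip' (u₀ y + v y) 0
      simpa [hg0] using this
    have hFbound : eLpNorm (fun x : ℝ => ∫ y : ℝ, K (x - y) * G y) 2 volume ≤
        ENNReal.ofReal r * (ENNReal.ofReal M * eLpNorm (⇑(u₀ + v)) 2 volume) :=
      hy.2.trans (mul_le_mul_right hsnorm _)
    have hLpnorm : ‖(hconv v).toLp _‖ ≤ r * (M * ‖u₀ + v‖) := by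
      rw [Lp.norm_toLp]
      have hfin : ENNReal.ofReal r * (ENNReal.ofReal M * eLpNorm (⇑(u₀ + v)) 2 volume) ≠ ⊤ := by
        apply ENNReal.mul_ne_top ENNReal.ofReal_ne_top
        exact ENNReal.mul_ne_top ENNReal.ofReal_ne_top (Lp.eLpNorm_ne_top _)
      refine le_trans (ENNReal.toReal_mono hfin hFbound) (le_of_eq ?_)
      rw [ENNReal.toReal_mul, ENNReal.toReal_mul, ENNReal.toReal_ofReal hr0,
        ENNReal.toReal_ofReal hM.le, ← Lp.norm_def]
    have hub : ‖u₀ + v‖ ≤ ‖u₀‖ + 1 := by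
      refine (norm_add_le _ _).trans ?_
      linarith
    have hεD : ε * (M * r * (‖u₀‖ + 1)) ≤ ρ * C := by
      have hD : 0 < M * r * (‖u₀‖ + 1) := by positivity
      calc ε * (M * r * (‖u₀‖ + 1)) ≤ (ρ * C / (M * r * (‖u₀‖ + 1))) * (M * r * (‖u₀‖ + 1)) :=
            mul_le_mul_of_nonneg_right hεbound hD.le
        _ = ρ * C := div_mul_cancel₀ _ hD.ne'
    rw [hΦ v, norm_smul, Real.norm_eq_abs, abs_of_pos hε]
    calc ε * ‖T ((hconv v).toLp _)‖ ≤ ε * (‖(hconv v).toLp _‖ / C) :=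
          mul_le_mul_of_nonneg_left (hT _) hε.le
      _ ≤ ε * (r * (M * (‖u₀‖ + 1)) / C) := by
          apply mul_le_mul_of_nonneg_left _ hε.le
          gcongr
          refine hLpnorm.trans ?_
          have : M * ‖u₀ + v‖ ≤ M * (‖u₀‖ + 1) := mul_le_mul_of_nonneg_left hub hM.le
          exact mul_le_mul_of_nonneg_left this hr0
      _ ≤ ρ := by
          calc ε * (r * (M * (‖u₀‖ + 1)) / C) = ε * (M * r * (‖u₀‖ + 1)) / C := by ring
            _ ≤ ρ * C / C := by
                gcongr
            _ = ρ := by field_simp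
  refine ⟨fun v₁ v₂ _ _ => contraction v₁ v₂, ?_⟩
  -- fixed point via Banach on the closed ball
  have hσ0 : 0 ≤ σ := by
    rw [hσdef]
    positivity
  set S : Set (Lp ℝ 2 (volume : Measure ℝ)) := Metric.closedBall 0 ρ with hS_def
  haveI : CompleteSpace S := Metric.isClosed_closedBall.isComplete.completeSpace_coe
  haveI : Nonempty S := ⟨⟨0, by simp [hS_def, hρ0.le]⟩⟩
  have memS : ∀ w : Lp ℝ 2 (volume : Measure ℝ), w ∈ S ↔ ‖w‖ ≤ ρ := by
    intro w
    simp [hS_def, mem_closedBall_zero_iff]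
  set f : S → S := fun w => ⟨Φ w, (memS _).mpr (invariance w ((memS _).mp w.2))⟩ with hf_def
  have hcontr : ContractingWith σ.toNNReal f := by
    constructor
    · rwa [← NNReal.coe_lt_one, Real.coe_toNNReal _ hσ0]
    · rw [lipschitzWith_iff_dist_le_mul]
      intro x y
      rw [Subtype.dist_eq, Subtype.dist_eq, dist_eq_norm, dist_eq_norm,
        Real.coe_toNNReal _ hσ0]
      exact contraction x y
  set u : S := hcontr.fixedPoint f with hu_def
  have hufix : f u = u := hcontr.fixedPoint_isFixedPt
  have hufixval : Φ (u : Lp ℝ 2 (volume : Measure ℝ)) = (u : Lp ℝ 2 (volume : Measure ℝ)) :=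
    congrArg Subtype.val hufix
  refine ⟨(u : Lp ℝ 2 (volume : Measure ℝ)), ⟨(memS _).mp u.2, ?_⟩, ?_⟩
  · exact hufixval
  · rintro w ⟨hw, hwfix⟩
    have h := contraction w u
    rw [hwfix, hufixval] at h
    have hnn : 0 ≤ ‖w - (u : Lp ℝ 2 (volume : Measure ℝ))‖ := norm_nonneg _
    have : ‖w - (u : Lp ℝ 2 (volume : Measure ℝ))‖ = 0 := by nlinarith
    have := sub_eq_zero.mp (norm_eq_zero.mp this)
    exact this
end

section
/- Continuity of the solution with respect to g: with T, K, u₀, ε, ρ, C, M as above, let g₁, g₂ be differentiable with gⱼ(0)=0, ‖gⱼ'‖_∞ ≤ M, and σ := ε M ‖K‖_{L¹}/C < 1. Let u_{p,j} ∈ B_ρ be the unique fixed point of Φⱼ(v) = ε T(K * (gⱼ∘(u₀+v))). Then ‖u_{p,1} - u_{p,2}‖_{L²} ≤ (ε/(1-σ)) · (‖K‖_{L¹}/C) · (‖u₀‖_{L²} + 1) · ‖g₁' - g₂'‖_{L^∞}. -/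
open MeasureTheory

open scoped ENNReal NNReal

namespace SolContG

open scoped ENNReal NNReal

lemma lint_neg (f : ℝ → ℝ≥0∞) : (∫⁻ y, f (-y)) = ∫⁻ y, f y :=
  (Measure.measurePreserving_neg (volume : Measure ℝ)).lintegral_comp_emb
    (MeasurableEquiv.neg ℝ).measurableEmbedding f

lemma lint_sub_left (x : ℝ) (f : ℝ → ℝ≥0∞) : (∫⁻ y, f (x - y)) = ∫⁻ y, f y := by
  simp_rw [sub_eq_add_neg]
  rw [lint_neg (fun z => f (x + z))]
  exact lintegral_add_left_eq_self f x

lemma mp_sub_left (x : ℝ) :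
    MeasurePreserving (fun y : ℝ => x - y) volume volume := by
  have : (fun y : ℝ => x - y) = (fun z : ℝ => x + z) ∘ Neg.neg := by
    funext y; simp [sub_eq_add_neg]
  rw [this]
  exact (measurePreserving_add_left volume x).comp
    (Measure.measurePreserving_neg volume)

lemma conv_core (k g : ℝ → ℝ≥0∞) (hk : Measurable k) (hg : Measurable g) :
    ∫⁻ x, (∫⁻ y, k (x - y) * g y) ^ (2:ℝ) ≤
      (∫⁻ x, k x) ^ (2:ℝ) * ∫⁻ y, g y ^ (2:ℝ) := by
  have half : (0:ℝ) ≤ 1/2 := by norm_num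
  have step1 : ∀ x, (∫⁻ y, k (x - y) * g y) ^ (2:ℝ) ≤
      (∫⁻ x, k x) * ∫⁻ y, k (x - y) * g y ^ (2:ℝ) := by
    intro x
    have hmk : Measurable fun y => k (x - y) := hk.comp (measurable_const.sub measurable_id)
    have h1 : (∫⁻ y, k (x - y) * g y) ≤
        (∫⁻ y, k (x - y)) ^ (1/2:ℝ) * (∫⁻ y, k (x - y) * g y ^ (2:ℝ)) ^ (1/2:ℝ) := by
      have := ENNReal.lintegral_mul_norm_pow_le (μ := volume)
        (g := fun y => k (x - y) * g y ^ (2:ℝ))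
        hmk.aemeasurable (hmk.mul (hg.pow_const (2:ℝ))).aemeasurable half half (by norm_num)
      refine le_trans (le_of_eq ?_) this
      congr 1; funext y
      rw [ENNReal.mul_rpow_of_nonneg _ _ half, ← mul_assoc,
        ← ENNReal.rpow_add_of_nonneg _ _ half half]
      norm_num
      rw [← ENNReal.rpow_natCast (g y) 2]
      rw [← ENNReal.rpow_mul]
      norm_num
    calc (∫⁻ y, k (x - y) * g y) ^ (2:ℝ)
        ≤ ((∫⁻ y, k (x - y)) ^ (1/2:ℝ) * (∫⁻ y, k (x - y) * g y ^ (2:ℝ)) ^ (1/2:ℝ)) ^ (2:ℝ) :=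
          ENNReal.rpow_le_rpow h1 (by norm_num)
      _ = (∫⁻ y, k (x - y)) * ∫⁻ y, k (x - y) * g y ^ (2:ℝ) := by
          rw [ENNReal.mul_rpow_of_nonneg _ _ (by norm_num : (0:ℝ) ≤ 2),
            ← ENNReal.rpow_mul, ← ENNReal.rpow_mul]
          norm_num
      _ = (∫⁻ x, k x) * ∫⁻ y, k (x - y) * g y ^ (2:ℝ) := by
          rw [lint_sub_left x k]
  calc ∫⁻ x, (∫⁻ y, k (x - y) * g y) ^ (2:ℝ)
      ≤ ∫⁻ x, (∫⁻ x, k x) * ∫⁻ y, k (x - y) * g y ^ (2:ℝ) := lintegral_mono step1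
    _ = (∫⁻ x, k x) * ∫⁻ x, ∫⁻ y, k (x - y) * g y ^ (2:ℝ) := lintegral_const_mul _
        (Measurable.lintegral_prod_right' ((hk.comp (measurable_fst.sub measurable_snd)).mul
          ((hg.comp measurable_snd).pow_const (2:ℝ))))
    _ = (∫⁻ x, k x) * ∫⁻ y, ∫⁻ x, k (x - y) * g y ^ (2:ℝ) := by
        rw [lintegral_lintegral_swap ((hk.comp (measurable_fst.sub measurable_snd)).mul
          ((hg.comp measurable_snd).pow_const (2:ℝ))).aemeasurable]
    _ = (∫⁻ x, k x) * ∫⁻ y, (∫⁻ x, k (x - y)) * g y ^ (2:ℝ) := by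
        congr 1; apply lintegral_congr; intro y
        exact lintegral_mul_const _ (hk.comp (measurable_id.sub measurable_const))
    _ = (∫⁻ x, k x) ^ (2:ℝ) * ∫⁻ y, g y ^ (2:ℝ) := by
        have : ∀ y : ℝ, (∫⁻ x, k (x - y)) = ∫⁻ x, k x := fun y =>
          lintegral_sub_right_eq_self k y
        simp_rw [this]
        rw [lintegral_const_mul _ (hg.pow_const (2:ℝ)), ← mul_assoc]
        congr 1
        rw [show (2:ℝ) = ((2:ℕ):ℝ) by norm_num, ENNReal.rpow_natCast]
        ring


lemma conv_lemma (K h : ℝ → ℝ) (hK : Integrable K volume) (hh : MemLp h 2 volume) :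
    eLpNorm (fun x => ∫ y, K (x - y) * h y) 2 volume ≤
      (∫⁻ x, ‖K x‖₊) * eLpNorm h 2 volume ∧
    ∀ᵐ x : ℝ, Integrable (fun y => K (x - y) * h y) volume := by
  set K' := hK.1.mk K with hK'def
  have hK'm : Measurable K' := hK.1.stronglyMeasurable_mk.measurable
  have hKK' : K =ᵐ[volume] K' := hK.1.ae_eq_mk
  set h' := hh.1.mk h with hh'def
  have hh'm : Measurable h' := hh.1.stronglyMeasurable_mk.measurable
  have hhh' : h =ᵐ[volume] h' := hh.1.ae_eq_mk
  set k : ℝ → ℝ≥0∞ := fun x => (‖K' x‖₊ : ℝ≥0∞) with hkdef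
  set g : ℝ → ℝ≥0∞ := fun y => (‖h' y‖₊ : ℝ≥0∞) with hgdef
  have hkm : Measurable k := hK'm.nnnorm.coe_nnreal_ennreal
  have hgm : Measurable g := hh'm.nnnorm.coe_nnreal_ennreal
  -- pointwise identification of the majorant
  have hGeq : ∀ x : ℝ, (∫⁻ y, (‖K (x - y)‖₊ : ℝ≥0∞) * (‖h y‖₊ : ℝ≥0∞)) =
      ∫⁻ y, k (x - y) * g y := by
    intro x
    apply lintegral_congr_ae
    have e1 : (K ∘ fun y : ℝ => x - y) =ᵐ[volume] (K' ∘ fun y : ℝ => x - y) :=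
      (mp_sub_left x).quasiMeasurePreserving.ae_eq_comp hKK'
    filter_upwards [e1, hhh'] with y h1 h2
    simp only [Function.comp_apply] at h1
    simp [hkdef, hgdef, h1, h2]
  have hcore := conv_core k g hkm hgm
  have hIK : (∫⁻ x, k x) = ∫⁻ x, (‖K x‖₊ : ℝ≥0∞) := by
    apply lintegral_congr_ae
    filter_upwards [hKK'] with x hx
    simp [hkdef, hx]
  have hIKlt : (∫⁻ x, k x) < ⊤ := by
    rw [hIK]; exact hK.2
  have hg2 : (∫⁻ y, g y ^ (2:ℝ)) = eLpNorm h 2 volume ^ (2:ℝ) := by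
    have : eLpNorm h 2 volume = (∫⁻ y, g y ^ (2:ℝ)) ^ (1/2:ℝ) := by
      rw [eLpNorm_eq_lintegral_rpow_enorm_toReal (by norm_num) (by norm_num)]
      simp only [ENNReal.toReal_ofNat]
      congr 1
      apply lintegral_congr_ae
      filter_upwards [hhh'] with y hy
      simp [hgdef, hy]; rfl
    rw [this, ← ENNReal.rpow_mul]
    norm_num
  have hg2lt : (∫⁻ y, g y ^ (2:ℝ)) < ⊤ := by
    rw [hg2]
    exact ENNReal.rpow_lt_top_of_nonneg (by norm_num) hh.2.ne
  have hFle : ∀ x : ℝ, (‖∫ y, K (x - y) * h y‖₊ : ℝ≥0∞) ≤ ∫⁻ y, k (x - y) * g y := by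
    intro x
    calc (‖∫ y, K (x - y) * h y‖₊ : ℝ≥0∞) ≤ ∫⁻ y, (‖K (x - y) * h y‖₊ : ℝ≥0∞) :=
        enorm_integral_le_lintegral_enorm _
      _ = ∫⁻ y, (‖K (x - y)‖₊ : ℝ≥0∞) * (‖h y‖₊ : ℝ≥0∞) := by
          simp_rw [nnnorm_mul, ENNReal.coe_mul]
      _ = _ := hGeq x
  constructor
  · rw [eLpNorm_eq_lintegral_rpow_enorm_toReal (by norm_num) (by norm_num)]
    have : (2:ℝ≥0∞).toReal = (2:ℝ) := by simp
    rw [this]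
    calc (∫⁻ x, (‖∫ y, K (x - y) * h y‖₊ : ℝ≥0∞) ^ (2:ℝ)) ^ (1/2:ℝ)
        ≤ (∫⁻ x, (∫⁻ y, k (x - y) * g y) ^ (2:ℝ)) ^ (1/2:ℝ) := by
          apply ENNReal.rpow_le_rpow _ (by norm_num)
          exact lintegral_mono fun x => ENNReal.rpow_le_rpow (hFle x) (by norm_num)
      _ ≤ ((∫⁻ x, k x) ^ (2:ℝ) * ∫⁻ y, g y ^ (2:ℝ)) ^ (1/2:ℝ) :=
          ENNReal.rpow_le_rpow hcore (by norm_num)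
      _ = (∫⁻ x, (‖K x‖₊ : ℝ≥0∞)) * eLpNorm h 2 volume := by
          rw [ENNReal.mul_rpow_of_nonneg _ _ (by norm_num : (0:ℝ) ≤ 1/2),
            ← ENNReal.rpow_mul, hg2, ← ENNReal.rpow_mul, hIK]
          norm_num
  · have hJlt : (∫⁻ x, (∫⁻ y, k (x - y) * g y) ^ (2:ℝ)) < ⊤ :=
      lt_of_le_of_lt hcore (ENNReal.mul_lt_top
        (ENNReal.rpow_lt_top_of_nonneg (by norm_num : (0:ℝ) ≤ 2) hIKlt.ne) hg2lt)
    have hmeasG : Measurable fun x : ℝ => ∫⁻ y, k (x - y) * g y :=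
      Measurable.lintegral_prod_right' ((hkm.comp (measurable_fst.sub measurable_snd)).mul
        (hgm.comp measurable_snd))
    have hae : ∀ᵐ x : ℝ, (∫⁻ y, k (x - y) * g y) ^ (2:ℝ) < ⊤ :=
      ae_lt_top (hmeasG.pow_const (2:ℝ)) hJlt.ne
    filter_upwards [hae] with x hx
    have hfin : (∫⁻ y, k (x - y) * g y) < ⊤ := by
      by_contra hc
      push_neg at hc
      have : (∫⁻ y, k (x - y) * g y) = ⊤ := top_le_iff.mp hc
      rw [this, ENNReal.top_rpow_of_pos (by norm_num)] at hx
      exact absurd hx (lt_irrefl _)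
    refine ⟨?_, ?_⟩
    · exact (hK.1.comp_quasiMeasurePreserving
        (mp_sub_left x).quasiMeasurePreserving).mul hh.1
    · show (∫⁻ y, (‖K (x - y) * h y‖₊ : ℝ≥0∞)) < ⊤
      calc (∫⁻ y, (‖K (x - y) * h y‖₊ : ℝ≥0∞))
          = ∫⁻ y, (‖K (x - y)‖₊ : ℝ≥0∞) * (‖h y‖₊ : ℝ≥0∞) := by
            simp_rw [nnnorm_mul, ENNReal.coe_mul]
        _ = ∫⁻ y, k (x - y) * g y := hGeq x
        _ < ⊤ := hfin


lemma lip_of_deriv (g : ℝ → ℝ) (hg : Differentiable ℝ g) (L : ℝ) (hL : 0 ≤ L)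
    (h : ∀ z, |deriv g z| ≤ L) (a b : ℝ) : |g a - g b| ≤ L * |a - b| := by
  have hlip : LipschitzWith (.mk L hL : ℝ≥0) g := by
    apply lipschitzWith_of_nnnorm_deriv_le hg
    intro x
    rw [← NNReal.coe_le_coe]
    simpa [coe_nnnorm, Real.norm_eq_abs] using h x
  have := hlip.dist_le_mul a b
  simpa [Real.dist_eq] using this

lemma diff_norm_bound (K : ℝ → ℝ) (hK : Integrable K volume) (f1 f2 : ℝ → ℝ)
    (hf1 : MemLp f1 2 volume) (hf2 : MemLp f2 2 volume)
    (hc1 : MemLp (fun x => ∫ y, K (x - y) * f1 y) 2 volume)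
    (hc2 : MemLp (fun x => ∫ y, K (x - y) * f2 y) 2 volume)
    (B : ℝ≥0∞) (hB : eLpNorm (fun y => f1 y - f2 y) 2 volume ≤ B) (hBt : B ≠ ⊤) :
    ‖hc1.toLp _ - hc2.toLp _‖ ≤ ((∫⁻ x, (‖K x‖₊ : ℝ≥0∞)) * B).toReal := by
  have hae1 := (conv_lemma K f1 hK hf1).2
  have hae2 := (conv_lemma K f2 hK hf2).2
  have hsub : MemLp (fun y => f1 y - f2 y) 2 volume := hf1.sub hf2
  have hest := (conv_lemma K (fun y => f1 y - f2 y) hK hsub).1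
  have hcoe : ⇑(hc1.toLp _ - hc2.toLp _) =ᵐ[volume]
      fun x => ∫ y, K (x - y) * (f1 y - f2 y) := by
    filter_upwards [Lp.coeFn_sub (hc1.toLp _) (hc2.toLp _), hc1.coeFn_toLp, hc2.coeFn_toLp,
      hae1, hae2] with x e0 e1 e2 i1 i2
    rw [e0, Pi.sub_apply, e1, e2, ← integral_sub i1 i2]
    congr 1; funext y; ring
  rw [Lp.norm_def, eLpNorm_congr_ae hcoe]
  apply ENNReal.toReal_mono (ENNReal.mul_ne_top hK.2.ne hBt)
  exact le_trans hest (mul_le_mul_right hB _)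

end SolContG


theorem solution_continuity_in_g (C M ε ρ : ℝ) (hC : 0 < C) (hM : 0 < M)
    (hε : 0 < ε) (hρ0 : 0 < ρ) (hρ1 : ρ ≤ 1)
    (K : ℝ → ℝ) (hK : Integrable K (volume : Measure ℝ))
    (u₀ : Lp ℝ 2 (volume : Measure ℝ))
    (g₁ g₂ : ℝ → ℝ) (hg₁ : Differentiable ℝ g₁) (hg₂ : Differentiable ℝ g₂)
    (hg₁0 : g₁ 0 = 0) (hg₂0 : g₂ 0 = 0)
    (hg₁' : ∀ z : ℝ, |deriv g₁ z| ≤ M) (hg₂' : ∀ z : ℝ, |deriv g₂ z| ≤ M)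
    (T : Lp ℝ 2 (volume : Measure ℝ) →ₗ[ℝ] Lp ℝ 2 (volume : Measure ℝ))
    (hT : ∀ h : Lp ℝ 2 (volume : Measure ℝ), ‖T h‖ ≤ ‖h‖ / C)
    (hconv₁ : ∀ v : Lp ℝ 2 (volume : Measure ℝ),
      MemLp (fun x : ℝ => ∫ y : ℝ, K (x - y) * g₁ (u₀ y + v y)) 2 (volume : Measure ℝ))
    (hconv₂ : ∀ v : Lp ℝ 2 (volume : Measure ℝ),
      MemLp (fun x : ℝ => ∫ y : ℝ, K (x - y) * g₂ (u₀ y + v y)) 2 (volume : Measure ℝ))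
    (Φ₁ Φ₂ : Lp ℝ 2 (volume : Measure ℝ) → Lp ℝ 2 (volume : Measure ℝ))
    (hΦ₁ : ∀ v, Φ₁ v = ε • T ((hconv₁ v).toLp _))
    (hΦ₂ : ∀ v, Φ₂ v = ε • T ((hconv₂ v).toLp _))
    (hεbound : ε ≤ ρ * C / (M * (∫ x : ℝ, |K x|) * (‖u₀‖ + 1)))
    (σ : ℝ) (hσdef : σ = ε * M * (∫ x : ℝ, |K x|) / C) (hσ : σ < 1)
    (u_p1 u_p2 : Lp ℝ 2 (volume : Measure ℝ))
    (h₁ρ : ‖u_p1‖ ≤ ρ) (h₂ρ : ‖u_p2‖ ≤ ρ)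
    (hfix₁ : Φ₁ u_p1 = u_p1) (hfix₂ : Φ₂ u_p2 = u_p2)
    (δ : ℝ) (hδ : ∀ z : ℝ, |deriv g₁ z - deriv g₂ z| ≤ δ) :
    ‖u_p1 - u_p2‖ ≤
      (ε / (1 - σ)) * ((∫ x : ℝ, |K x|) / C) * (‖u₀‖ + 1) * δ := by
  set d := ‖u_p1 - u_p2‖ with hd
  set IK := ∫ x : ℝ, |K x| with hIKdef
  have hd0 : 0 ≤ d := norm_nonneg _
  have hIK0 : 0 ≤ IK := by rw [hIKdef]; exact integral_nonneg fun x => abs_nonneg _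
  have δ0 : 0 ≤ δ := le_trans (abs_nonneg _) (hδ 0)
  have hIKe : (∫⁻ x, (‖K x‖₊ : ℝ≥0∞)) = ENNReal.ofReal IK := by
    rw [show (∫⁻ x, (‖K x‖₊ : ℝ≥0∞)) = ∫⁻ x, ‖K x‖ₑ from rfl, ← MeasureTheory.ofReal_integral_norm_eq_lintegral_enorm hK, hIKdef]
    simp only [Real.norm_eq_abs]
  have lip1 : ∀ a b : ℝ, |g₁ a - g₁ b| ≤ M * |a - b| :=
    SolContG.lip_of_deriv g₁ hg₁ M hM.le hg₁'
  have lip2 : ∀ a b : ℝ, |g₂ a - g₂ b| ≤ M * |a - b| :=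
    SolContG.lip_of_deriv g₂ hg₂ M hM.le hg₂'
  have lipd : ∀ z : ℝ, |g₁ z - g₂ z| ≤ δ * |z| := by
    intro z
    have hdz : ∀ w : ℝ, |deriv (g₁ - g₂) w| ≤ δ := by
      intro w
      rw [show g₁ - g₂ = fun y => g₁ y - g₂ y from rfl, deriv_fun_sub (hg₁ w) (hg₂ w)]
      exact hδ w
    have := SolContG.lip_of_deriv (g₁ - g₂) (hg₁.sub hg₂) δ δ0 hdz z 0
    simpa [hg₁0, hg₂0] using this
  have mw1 : MemLp (fun y => u₀ y + u_p1 y) 2 volume := (Lp.memLp u₀).add (Lp.memLp u_p1)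
  have mw2 : MemLp (fun y => u₀ y + u_p2 y) 2 volume := (Lp.memLp u₀).add (Lp.memLp u_p2)
  have mh1 : MemLp (fun y => g₁ (u₀ y + u_p1 y)) 2 volume := by
    refine MemLp.of_le_mul (c := M) mw1 (hg₁.continuous.comp_aestronglyMeasurable mw1.1) ?_
    filter_upwards with y
    have := lip1 (u₀ y + u_p1 y) 0
    simpa [hg₁0, Real.norm_eq_abs] using this
  have mh2 : MemLp (fun y => g₁ (u₀ y + u_p2 y)) 2 volume := by
    refine MemLp.of_le_mul (c := M) mw2 (hg₁.continuous.comp_aestronglyMeasurable mw2.1) ?_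
    filter_upwards with y
    have := lip1 (u₀ y + u_p2 y) 0
    simpa [hg₁0, Real.norm_eq_abs] using this
  have mh3 : MemLp (fun y => g₂ (u₀ y + u_p2 y)) 2 volume := by
    refine MemLp.of_le_mul (c := M) mw2 (hg₂.continuous.comp_aestronglyMeasurable mw2.1) ?_
    filter_upwards with y
    have := lip2 (u₀ y + u_p2 y) 0
    simpa [hg₂0, Real.norm_eq_abs] using this
  have hDeq : eLpNorm (fun y => u_p1 y - u_p2 y) 2 volume = ENNReal.ofReal d := by
    have e : ⇑(u_p1 - u_p2) =ᵐ[volume] fun y => u_p1 y - u_p2 y := by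
      filter_upwards [Lp.coeFn_sub u_p1 u_p2] with y hy
      simpa using hy
    rw [← eLpNorm_congr_ae e, hd, Lp.norm_def,
      ENNReal.ofReal_toReal (Lp.eLpNorm_ne_top _)]
  have hW2eq : eLpNorm (fun y => u₀ y + u_p2 y) 2 volume = ENNReal.ofReal ‖u₀ + u_p2‖ := by
    have e : ⇑(u₀ + u_p2) =ᵐ[volume] fun y => u₀ y + u_p2 y := by
      filter_upwards [Lp.coeFn_add u₀ u_p2] with y hy
      simpa using hy
    rw [← eLpNorm_congr_ae e, Lp.norm_def,
      ENNReal.ofReal_toReal (Lp.eLpNorm_ne_top _)]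
  have E1 : eLpNorm (fun y => g₁ (u₀ y + u_p1 y) - g₁ (u₀ y + u_p2 y)) 2 volume ≤
      ENNReal.ofReal (M * d) := by
    calc eLpNorm (fun y => g₁ (u₀ y + u_p1 y) - g₁ (u₀ y + u_p2 y)) 2 volume
        ≤ eLpNorm (M • fun y : ℝ => u_p1 y - u_p2 y) 2 volume := by
          apply eLpNorm_mono
          intro y
          simp only [Pi.smul_apply, smul_eq_mul, Real.norm_eq_abs]
          have e : (u₀ y + u_p1 y) - (u₀ y + u_p2 y) = u_p1 y - u_p2 y := by ring
          calc |g₁ (u₀ y + u_p1 y) - g₁ (u₀ y + u_p2 y)|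
              ≤ M * |(u₀ y + u_p1 y) - (u₀ y + u_p2 y)| := lip1 _ _
            _ = |M * (u_p1 y - u_p2 y)| := by
                rw [abs_mul, abs_of_nonneg hM.le, e]
      _ = ENNReal.ofReal (M * d) := by
          rw [eLpNorm_const_smul, hDeq, Real.enorm_eq_ofReal hM.le,
            ← ENNReal.ofReal_mul hM.le]
  have E2 : eLpNorm (fun y => g₁ (u₀ y + u_p2 y) - g₂ (u₀ y + u_p2 y)) 2 volume ≤
      ENNReal.ofReal (δ * ‖u₀ + u_p2‖) := by
    calc eLpNorm (fun y => g₁ (u₀ y + u_p2 y) - g₂ (u₀ y + u_p2 y)) 2 volume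
        ≤ eLpNorm (δ • fun y : ℝ => u₀ y + u_p2 y) 2 volume := by
          apply eLpNorm_mono
          intro y
          simp only [Pi.smul_apply, smul_eq_mul, Real.norm_eq_abs]
          calc |g₁ (u₀ y + u_p2 y) - g₂ (u₀ y + u_p2 y)|
              ≤ δ * |u₀ y + u_p2 y| := lipd _
            _ = |δ * (u₀ y + u_p2 y)| := by rw [abs_mul, abs_of_nonneg δ0]
      _ = ENNReal.ofReal (δ * ‖u₀ + u_p2‖) := by
          rw [eLpNorm_const_smul, hW2eq, Real.enorm_eq_ofReal δ0,
            ← ENNReal.ofReal_mul δ0]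
  have b1 : ‖(hconv₁ u_p1).toLp _ - (hconv₁ u_p2).toLp _‖ ≤ IK * (M * d) := by
    have hb := SolContG.diff_norm_bound K hK _ _ mh1 mh2 (hconv₁ u_p1) (hconv₁ u_p2)
      (ENNReal.ofReal (M * d)) E1 ENNReal.ofReal_ne_top
    rw [hIKe, ← ENNReal.ofReal_mul hIK0,
      ENNReal.toReal_ofReal (mul_nonneg hIK0 (mul_nonneg hM.le hd0))] at hb
    exact hb
  have b2 : ‖(hconv₁ u_p2).toLp _ - (hconv₂ u_p2).toLp _‖ ≤ IK * (δ * ‖u₀ + u_p2‖) := by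
    have hb := SolContG.diff_norm_bound K hK _ _ mh2 mh3 (hconv₁ u_p2) (hconv₂ u_p2)
      (ENNReal.ofReal (δ * ‖u₀ + u_p2‖)) E2 ENNReal.ofReal_ne_top
    rw [hIKe, ← ENNReal.ofReal_mul hIK0,
      ENNReal.toReal_ofReal (mul_nonneg hIK0 (mul_nonneg δ0 (norm_nonneg _)))] at hb
    exact hb
  have t1 : ‖Φ₁ u_p1 - Φ₁ u_p2‖ ≤ ε * ((IK * (M * d)) / C) := by
    rw [hΦ₁ u_p1, hΦ₁ u_p2, ← smul_sub, ← map_sub, norm_smul, Real.norm_eq_abs,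
      abs_of_pos hε]
    refine mul_le_mul_of_nonneg_left (le_trans (hT _) ?_) hε.le
    exact (div_le_div_iff_of_pos_right hC).mpr b1
  have t2 : ‖Φ₁ u_p2 - Φ₂ u_p2‖ ≤ ε * ((IK * (δ * ‖u₀ + u_p2‖)) / C) := by
    rw [hΦ₁ u_p2, hΦ₂ u_p2, ← smul_sub, ← map_sub, norm_smul, Real.norm_eq_abs,
      abs_of_pos hε]
    refine mul_le_mul_of_nonneg_left (le_trans (hT _) ?_) hε.le
    exact (div_le_div_iff_of_pos_right hC).mpr b2
  have tri : d ≤ ‖Φ₁ u_p1 - Φ₁ u_p2‖ + ‖Φ₁ u_p2 - Φ₂ u_p2‖ := by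
    conv_lhs => rw [hd, ← hfix₁, ← hfix₂]
    exact norm_sub_le_norm_sub_add_norm_sub _ _ _
  have hNle : ‖u₀ + u_p2‖ ≤ ‖u₀‖ + 1 :=
    le_trans (norm_add_le _ _) (by linarith)
  have t2' : ‖Φ₁ u_p2 - Φ₂ u_p2‖ ≤ ε * ((IK * (δ * (‖u₀‖ + 1))) / C) := by
    refine le_trans t2 (mul_le_mul_of_nonneg_left ?_ hε.le)
    exact (div_le_div_iff_of_pos_right hC).mpr
      (mul_le_mul_of_nonneg_left (mul_le_mul_of_nonneg_left hNle δ0) hIK0)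
  have hσd : ε * ((IK * (M * d)) / C) = σ * d := by
    rw [hσdef]
    field_simp
  have h1σ : 0 < 1 - σ := by linarith
  have key : d - σ * d ≤ ε * ((IK * (δ * (‖u₀‖ + 1))) / C) := by
    have := le_trans tri (add_le_add t1 t2')
    rw [hσd] at this
    linarith
  rw [show (ε / (1 - σ)) * (IK / C) * (‖u₀‖ + 1) * δ =
      (ε * ((IK * (δ * (‖u₀‖ + 1))) / C)) / (1 - σ) from by field_simp]
  rw [le_div_iff₀ h1σ]
  nlinarith [key]
end
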